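/- (Sequential Chernoff bound with conditional probability bounds.) Let χ₁,…,χ_t be {0,1}-valued random variables on a common probability space, and let p ∈ [0,1] be such that for every i ∈ {1,…,t} and every σ ∈ {0,1}^{i−1} with Pr[(χ₁,…,χ_{i−1}) = σ] > 0, one has Pr[χᵢ = 1 ∣ (χ₁,…,χ_{i−1}) = σ] ≤ p. Then for every real u with u > 2e·p·t, one has Pr[χ₁ + ⋯ + χ_t > u] ≤ 2^{−u}. -/

import Mathlib

open MeasureTheory Finset
open scoped ENNReal

section helpers
open MeasureTheory Finset

/-- k-th smallest element existence -/
lemma exists_kth_elt {n : ℕ} (T : Finset (Fin n)) : ∀ (k : ℕ), k + 1 ≤ T.card →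
    ∃ m ∈ T, (T.filter (· < m)).card = k := by
  intro k
  induction k with
  | zero =>
    intro h
    have hne : T.Nonempty := Finset.card_pos.mp h
    refine ⟨T.min' hne, T.min'_mem hne, ?_⟩
    rw [Finset.card_eq_zero, Finset.filter_eq_empty_iff]
    intro j hj
    exact not_lt.mpr (T.min'_le j hj)
  | succ k ih =>
    intro h
    obtain ⟨m, hmT, hcard⟩ := ih (le_trans (Nat.le_succ _) h)
    have hsplit := Finset.card_filter_add_card_filter_not (s := T) (p := (· < m))
    have hU : (T.filter (fun j => m < j)).Nonempty := by
      by_contra hUe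
      rw [Finset.not_nonempty_iff_eq_empty] at hUe
      have hsub : T.filter (fun j => ¬ j < m) ⊆ insert m (T.filter (fun j => m < j)) := by
        intro j hj
        simp only [Finset.mem_filter, not_lt] at hj
        rcases eq_or_lt_of_le hj.2 with h1 | h1
        · exact Finset.mem_insert.mpr (Or.inl h1.symm)
        · exact Finset.mem_insert.mpr (Or.inr (Finset.mem_filter.mpr ⟨hj.1, h1⟩))
      have h2 := Finset.card_le_card hsub
      rw [hUe] at h2
      have h3 : (insert m (∅ : Finset (Fin n))).card = 1 := by simp
      rw [h3] at h2
      omega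
    set m' := (T.filter (fun j => m < j)).min' hU with hm'
    have hm'mem := (T.filter (fun j => m < j)).min'_mem hU
    rw [Finset.mem_filter] at hm'mem
    refine ⟨m', hm'mem.1, ?_⟩
    have : T.filter (· < m') = insert m (T.filter (· < m)) := by
      ext j
      simp only [Finset.mem_insert, Finset.mem_filter]
      constructor
      · rintro ⟨hjT, hjm'⟩
        rcases lt_trichotomy j m with h1 | h1 | h1
        · exact Or.inr ⟨hjT, h1⟩
        · exact Or.inl h1
        · exact absurd ((T.filter (fun j => m < j)).min'_le j (Finset.mem_filter.mpr ⟨hjT, h1⟩)) (not_le.mpr hjm')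
      · rintro (rfl | ⟨hjT, hjm⟩)
        · exact ⟨hmT, hm'mem.2⟩
        · exact ⟨hjT, lt_trans hjm hm'mem.2⟩
    rw [this, Finset.card_insert_of_notMem (by simp), hcard]

/-- history probability bound -/
lemma hist_bound {Ω : Type*} [MeasurableSpace Ω] (μ : Measure Ω) [IsProbabilityMeasure μ]
    {t : ℕ} (χ : Fin t → Ω → Bool) (p : ℝ)
    (hcond : ∀ (i : Fin t) (σ : Fin t → Bool),
      μ ({ω | χ i ω = true} ∩ {ω | ∀ j : Fin t, j < i → χ j ω = σ j}) ≤
        ENNReal.ofReal p * μ {ω | ∀ j : Fin t, j < i → χ j ω = σ j})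
    (σ : Fin t → Bool) : ∀ (m : ℕ),
    μ {ω | ∀ j : Fin t, (j : ℕ) < m → χ j ω = σ j} ≤
      ENNReal.ofReal p ^ (Finset.univ.filter (fun j : Fin t => (j : ℕ) < m ∧ σ j = true)).card := by
  intro m
  induction m with
  | zero => simp
  | succ m ih =>
    by_cases hm : m < t
    · set i : Fin t := ⟨m, hm⟩ with hi
      have hset : {ω | ∀ j : Fin t, (j : ℕ) < m + 1 → χ j ω = σ j} =
          {ω | χ i ω = σ i} ∩ {ω | ∀ j : Fin t, j < i → χ j ω = σ j} := by
        ext ω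
        simp only [Set.mem_inter_iff, Set.mem_setOf_eq, Fin.lt_def]
        constructor
        · intro h
          exact ⟨h i (by simp [hi]), fun j hj => h j (by exact Nat.lt_succ_of_lt hj)⟩
        · rintro ⟨h1, h2⟩ j hj
          rcases Nat.lt_succ_iff_lt_or_eq.mp hj with h' | h'
          · exact h2 j h'
          · have : j = i := by apply Fin.ext; simp [hi, h']
            rw [this]; exact h1
      have hfilter :
          (Finset.univ.filter (fun j : Fin t => (j : ℕ) < m + 1 ∧ σ j = true)) =
          if σ i = true then insert i (Finset.univ.filter (fun j : Fin t => (j : ℕ) < m ∧ σ j = true))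
          else (Finset.univ.filter (fun j : Fin t => (j : ℕ) < m ∧ σ j = true)) := by
        split_ifs with hσ
        · ext j
          simp only [Finset.mem_insert, Finset.mem_filter, Finset.mem_univ, true_and]
          constructor
          · rintro ⟨hj1, hj2⟩
            rcases Nat.lt_succ_iff_lt_or_eq.mp hj1 with h' | h'
            · exact Or.inr ⟨h', hj2⟩
            · exact Or.inl (Fin.ext h')
          · rintro (rfl | ⟨hj1, hj2⟩)
            · exact ⟨by simp [hi], hσ⟩
            · exact ⟨by omega, hj2⟩
        · ext j
          simp only [Finset.mem_filter, Finset.mem_univ, true_and]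
          constructor
          · rintro ⟨hj1, hj2⟩
            rcases Nat.lt_succ_iff_lt_or_eq.mp hj1 with h' | h'
            · exact ⟨h', hj2⟩
            · exact absurd hj2 (by rw [show j = i from Fin.ext h']; simp [hσ])
          · rintro ⟨hj1, hj2⟩
            exact ⟨by omega, hj2⟩
      rw [hset, hfilter]
      by_cases hσ : σ i = true
      · simp only [hσ, if_true]
        rw [Finset.card_insert_of_notMem (by simp [hi])]
        rw [pow_succ']
        calc μ ({ω | χ i ω = true} ∩ {ω | ∀ j : Fin t, j < i → χ j ω = σ j})
            ≤ ENNReal.ofReal p * μ {ω | ∀ j : Fin t, j < i → χ j ω = σ j} := hcond i σ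
          _ ≤ ENNReal.ofReal p * ENNReal.ofReal p ^ (Finset.univ.filter (fun j : Fin t => (j : ℕ) < m ∧ σ j = true)).card := by
              apply mul_le_mul_right
              have : {ω | ∀ j : Fin t, j < i → χ j ω = σ j} =
                  {ω | ∀ j : Fin t, (j : ℕ) < m → χ j ω = σ j} := by
                ext ω; simp only [Set.mem_setOf_eq, Fin.lt_def, hi]
              rw [this]; exact ih
      · rw [if_neg hσ]
        refine le_trans (measure_mono Set.inter_subset_right) ?_
        have : {ω | ∀ j : Fin t, j < i → χ j ω = σ j} =
            {ω | ∀ j : Fin t, (j : ℕ) < m → χ j ω = σ j} := by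
          ext ω; simp only [Set.mem_setOf_eq, Fin.lt_def, hi]
        rw [this]; exact ih
    · have hset : {ω | ∀ j : Fin t, (j : ℕ) < m + 1 → χ j ω = σ j} =
          {ω | ∀ j : Fin t, (j : ℕ) < m → χ j ω = σ j} := by
        ext ω
        simp only [Set.mem_setOf_eq]
        constructor
        · intro h j hj; exact h j (by omega)
        · intro h j _; exact h j (by omega)
      have hfilter : (Finset.univ.filter (fun j : Fin t => (j : ℕ) < m + 1 ∧ σ j = true)) =
          (Finset.univ.filter (fun j : Fin t => (j : ℕ) < m ∧ σ j = true)) := by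
        ext j
        have := j.isLt
        simp only [Finset.mem_filter, Finset.mem_univ, true_and]
        constructor
        · rintro ⟨_, h2⟩; exact ⟨by omega, h2⟩
        · rintro ⟨_, h2⟩; exact ⟨by omega, h2⟩
      rw [hset, hfilter]; exact ih

/-- k^k ≤ k! e^k -/
lemma pow_self_le_factorial_mul_exp : ∀ (k : ℕ), (k : ℝ) ^ k ≤ (k.factorial : ℝ) * Real.exp 1 ^ k := by
  intro k
  induction k with
  | zero => simp
  | succ k ih =>
    rcases Nat.eq_zero_or_pos k with rfl | hk
    · norm_num [Nat.factorial]

    have hkR : (0:ℝ) < k := by exact_mod_cast hk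
    have step : ((k:ℝ) + 1) ^ k ≤ Real.exp 1 * (k:ℝ) ^ k := by
      have h1 : ((k:ℝ) + 1) / k ≤ Real.exp (1 / k) := by
        rw [div_le_iff₀ hkR]
        have h := Real.add_one_le_exp (1 / (k:ℝ))
        have hm : (1/(k:ℝ))*k = 1 := by field_simp
        nlinarith [Real.exp_pos (1/(k:ℝ))]
      have h2 : (((k:ℝ) + 1) / k) ^ k ≤ Real.exp (1/k) ^ k := by
        apply pow_le_pow_left₀ (by positivity) h1
      rw [← Real.exp_nat_mul] at h2
      have h3 : (k:ℝ) * (1 / k) = 1 := by field_simp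
      rw [h3] at h2
      calc ((k:ℝ) + 1) ^ k = (((k:ℝ)+1)/k) ^ k * (k:ℝ) ^ k := by
            rw [div_pow]; field_simp
        _ ≤ Real.exp 1 * (k:ℝ) ^ k := by
            apply mul_le_mul_of_nonneg_right h2 (by positivity)
    have : ((k:ℝ) + 1) ^ (k+1) = ((k:ℝ)+1) * ((k:ℝ)+1) ^ k := by ring
    push_cast
    rw [this]
    calc ((k:ℝ)+1) * ((k:ℝ)+1) ^ k ≤ ((k:ℝ)+1) * (Real.exp 1 * (k:ℝ) ^ k) := by
          apply mul_le_mul_of_nonneg_left step (by positivity)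
      _ ≤ ((k:ℝ)+1) * (Real.exp 1 * ((k.factorial : ℝ) * Real.exp 1 ^ k)) := by
          apply mul_le_mul_of_nonneg_left _ (by positivity)
          apply mul_le_mul_of_nonneg_left ih (by positivity)
      _ = (((k:ℕ)+1).factorial : ℝ) * Real.exp 1 ^ (k+1) := by
          rw [Nat.factorial_succ]; push_cast; ring
end helpers

/-- sequential Chernoff bound, as used in the Claim on `n₄`: if
`χ₁, …, χ_t` are Boolean random variables such that, conditioned on any outcome of the
preceding variables, each `χᵢ` equals `1` with probability at most `p` (expressed
multiplicatively, which also covers histories of probability zero), then for every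
`u > 2e·p·t` we have `Pr[χ₁ + ⋯ + χ_t > u] ≤ 2^{−u}`. -/
theorem sequential_chernoff_bound
    {Ω : Type*} [MeasurableSpace Ω] (μ : Measure Ω) [IsProbabilityMeasure μ]
    {t : ℕ} (χ : Fin t → Ω → Bool) (p : ℝ) (hp0 : 0 ≤ p) (hp1 : p ≤ 1)
    (hcond : ∀ (i : Fin t) (σ : Fin t → Bool),
      μ ({ω | χ i ω = true} ∩ {ω | ∀ j : Fin t, j < i → χ j ω = σ j}) ≤
        ENNReal.ofReal p * μ {ω | ∀ j : Fin t, j < i → χ j ω = σ j})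
    (u : ℝ) (hu : 2 * Real.exp 1 * p * t < u) :
    μ {ω | u < ∑ i, (if χ i ω = true then (1 : ℝ) else 0)} ≤
      ENNReal.ofReal ((2 : ℝ) ^ (-u)) := by
  classical
  have hu0 : 0 < u := by
    refine lt_of_le_of_lt ?_ hu
    have := Real.exp_pos 1
    positivity
  set k : ℕ := Nat.floor u + 1 with hk
  have hk1 : 1 ≤ k := Nat.le_add_left _ _
  have huk : u < k := by
    push_cast [hk]
    exact Nat.lt_floor_add_one u
  have hk0 : (0:ℝ) < k := lt_trans hu0 huk
  set I : Finset (Fin t × Finset (Fin t)) :=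
    Finset.univ.filter (fun x => x.2.card = k - 1 ∧ ∀ j ∈ x.2, j < x.1) with hI
  set A : Fin t × Finset (Fin t) → Set Ω :=
    fun x => {ω | χ x.1 ω = true ∧ ∀ j : Fin t, j < x.1 → (χ j ω = true ↔ j ∈ x.2)} with hA
  -- covering
  have hcover : {ω | u < ∑ i, (if χ i ω = true then (1:ℝ) else 0)} ⊆ ⋃ x ∈ I, A x := by
    intro ω hω
    simp only [Set.mem_setOf_eq] at hω
    rw [Finset.sum_boole] at hω
    set T := Finset.univ.filter (fun i => χ i ω = true) with hT
    have hTcard : k ≤ T.card := by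
      have h1 : Nat.floor u < T.card := (Nat.floor_lt hu0.le).mpr hω
      omega
    obtain ⟨m, hmT, hmc⟩ := exists_kth_elt T (k-1) (by omega)
    refine Set.mem_iUnion₂.mpr ⟨(m, T.filter (· < m)), ?_, ?_⟩
    · rw [hI, Finset.mem_filter]
      exact ⟨Finset.mem_univ _, hmc, fun j hj => (Finset.mem_filter.mp hj).2⟩
    · have hm : χ m ω = true := (Finset.mem_filter.mp hmT).2
      refine ⟨hm, fun j hj => ?_⟩
      simp only [Finset.mem_filter, hT, Finset.mem_univ, true_and]
      constructor
      · intro h; exact ⟨h, hj⟩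
      · intro h; exact h.1
  -- individual bound
  have hAle : ∀ x ∈ I, μ (A x) ≤ ENNReal.ofReal p ^ k := by
    intro x hx
    rw [hI, Finset.mem_filter] at hx
    obtain ⟨-, hxc, hxlt⟩ := hx
    set σ : Fin t → Bool := fun j => decide (j ∈ x.2) with hσ
    have hsub : A x ⊆ {ω | χ x.1 ω = true} ∩ {ω | ∀ j : Fin t, j < x.1 → χ j ω = σ j} := by
      rintro ω ⟨h1, h2⟩
      refine ⟨h1, fun j hj => ?_⟩
      have h3 := h2 j hj
      by_cases hmem : j ∈ x.2
      · simp only [hσ, hmem, decide_eq_true_eq, decide_true]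
        exact h3.mpr hmem
      · simp only [hσ, hmem, decide_false]
        cases h : χ j ω with
        | false => rfl
        | true => exact absurd (h3.mp h) hmem
    calc μ (A x) ≤ μ ({ω | χ x.1 ω = true} ∩ {ω | ∀ j : Fin t, j < x.1 → χ j ω = σ j}) :=
          measure_mono hsub
      _ ≤ ENNReal.ofReal p * μ {ω | ∀ j : Fin t, j < x.1 → χ j ω = σ j} := hcond x.1 σ
      _ ≤ ENNReal.ofReal p * ENNReal.ofReal p ^ (k - 1) := by
          apply mul_le_mul_right
          have hset : {ω | ∀ j : Fin t, j < x.1 → χ j ω = σ j} =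
              {ω | ∀ j : Fin t, (j : ℕ) < (x.1 : ℕ) → χ j ω = σ j} := by
            ext ω; simp only [Set.mem_setOf_eq, Fin.lt_def]
          rw [hset]
          refine le_trans (hist_bound μ χ p hcond σ (x.1 : ℕ)) ?_
          have hcard : (Finset.univ.filter
              (fun j : Fin t => (j : ℕ) < (x.1 : ℕ) ∧ σ j = true)).card = k - 1 := by
            rw [← hxc]
            congr 1
            ext j
            simp only [Finset.mem_filter, Finset.mem_univ, true_and, hσ, decide_eq_true_eq]
            constructor
            · rintro ⟨-, h2⟩; exact h2
            · intro h; exact ⟨Fin.lt_def.mp (hxlt j h), h⟩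
          rw [hcard]
      _ = ENNReal.ofReal p ^ k := by
          have hkk : k - 1 + 1 = k := by omega
          rw [← pow_succ', hkk]
  -- sum bound
  have hstep : μ {ω | u < ∑ i, (if χ i ω = true then (1:ℝ) else 0)} ≤
      (I.card : ℝ≥0∞) * ENNReal.ofReal p ^ k := by
    calc μ {ω | u < ∑ i, (if χ i ω = true then (1:ℝ) else 0)}
        ≤ μ (⋃ x ∈ I, A x) := measure_mono hcover
      _ ≤ ∑ x ∈ I, μ (A x) := measure_biUnion_finset_le I A
      _ ≤ ∑ _x ∈ I, ENNReal.ofReal p ^ k := Finset.sum_le_sum hAle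
      _ = (I.card : ℝ≥0∞) * ENNReal.ofReal p ^ k := by
          rw [Finset.sum_const, nsmul_eq_mul]
  -- cardinality bound
  have hIcard : I.card ≤ t.choose k := by
    have hinj : I.card ≤ ((Finset.univ : Finset (Fin t)).powersetCard k).card := by
      apply Finset.card_le_card_of_injOn (fun x => insert x.1 x.2)
      · intro x hx
        rw [hI, Finset.mem_coe, Finset.mem_filter] at hx
        obtain ⟨-, hxc, hxlt⟩ := hx
        rw [Finset.mem_coe, Finset.mem_powersetCard]
        refine ⟨Finset.subset_univ _, ?_⟩
        rw [Finset.card_insert_of_notMem (fun h => lt_irrefl _ (hxlt _ h))]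
        omega
      · intro x hx y hy hxy
        simp only [Finset.mem_coe, hI, Finset.mem_filter] at hx hy
        obtain ⟨-, -, hxlt⟩ := hx
        obtain ⟨-, -, hylt⟩ := hy
        simp only at hxy
        have hxny : x.1 ∉ x.2 := fun h => lt_irrefl _ (hxlt _ h)
        have hyny : y.1 ∉ y.2 := fun h => lt_irrefl _ (hylt _ h)
        have h1 : x.1 = y.1 := by
          have hx1 : x.1 ∈ insert y.1 y.2 := by rw [← hxy]; exact Finset.mem_insert_self _ _
          have hy1 : y.1 ∈ insert x.1 x.2 := by rw [hxy]; exact Finset.mem_insert_self _ _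
          rcases Finset.mem_insert.mp hx1 with h | h
          · exact h
          · rcases Finset.mem_insert.mp hy1 with h' | h'
            · exact h'.symm
            · exact absurd (lt_trans (hylt _ h) (hxlt _ h')) (lt_irrefl _)
        have h2 : x.2 = y.2 := by
          have e1 : (insert x.1 x.2).erase x.1 = x.2 := Finset.erase_insert hxny
          have e2 : (insert y.1 y.2).erase y.1 = y.2 := Finset.erase_insert hyny
          rw [← e1, ← e2, hxy, h1]
        exact Prod.ext h1 h2
    rwa [Finset.card_powersetCard, Finset.card_univ, Fintype.card_fin] at hinj
  -- real arithmetic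
  have hreal : (t.choose k : ℝ) * p ^ k ≤ (2:ℝ) ^ (-u) := by
    have he : (0:ℝ) < Real.exp 1 := Real.exp_pos 1
    have hfacpos : (0:ℝ) < k.factorial := by exact_mod_cast k.factorial_pos
    have h1 : (t.choose k : ℝ) ≤ (t:ℝ) ^ k / k.factorial := Nat.choose_le_pow_div k t
    have hetp : Real.exp 1 * t * p ≤ u / 2 := by nlinarith
    have h3 : (t.choose k : ℝ) * p ^ k ≤ (Real.exp 1 * t * p / k) ^ k := by
      calc (t.choose k : ℝ) * p ^ k ≤ ((t:ℝ) ^ k / k.factorial) * p ^ k := by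
            apply mul_le_mul_of_nonneg_right h1 (by positivity)
        _ ≤ ((t:ℝ) ^ k * Real.exp 1 ^ k / (k:ℝ) ^ k) * p ^ k := by
            apply mul_le_mul_of_nonneg_right _ (by positivity)
            rw [div_le_div_iff₀ hfacpos (by positivity)]
            calc (t:ℝ) ^ k * (k:ℝ) ^ k ≤ (t:ℝ) ^ k * ((k.factorial : ℝ) * Real.exp 1 ^ k) := by
                  apply mul_le_mul_of_nonneg_left (pow_self_le_factorial_mul_exp k) (by positivity)
              _ = (t:ℝ) ^ k * Real.exp 1 ^ k * k.factorial := by ring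
        _ = (Real.exp 1 * t * p / k) ^ k := by
            rw [div_pow, mul_pow, mul_pow]
            ring
    have h4 : (Real.exp 1 * t * p / k) ^ k ≤ (u / (2 * k)) ^ k := by
      apply pow_le_pow_left₀ (by positivity)
      rw [div_le_div_iff₀ hk0 (by positivity)]
      nlinarith
    have h5 : (u / (2 * k)) ^ k ≤ (2:ℝ) ^ (-u) := by
      have hd : u / (2 * k) ≤ (2:ℝ) ^ (-(u / k)) := by
        have ha : (2:ℝ) ^ (-(1:ℝ)) ≤ (2:ℝ) ^ (-(u / k)) := by
          apply Real.rpow_le_rpow_of_exponent_le (by norm_num)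
          have : u / k ≤ 1 := (div_le_one hk0).mpr huk.le
          linarith
        have hb : (2:ℝ) ^ (-(1:ℝ)) = 1 / 2 := by
          rw [Real.rpow_neg_one]; norm_num
        have hc : u / (2 * k) ≤ 1 / 2 := by
          rw [div_le_div_iff₀ (by positivity) (by norm_num)]
          nlinarith
        linarith
      calc (u / (2 * k)) ^ k ≤ ((2:ℝ) ^ (-(u / k))) ^ k := by
            apply pow_le_pow_left₀ (by positivity) hd
        _ = (2:ℝ) ^ (-u) := by
            rw [← Real.rpow_natCast ((2:ℝ) ^ (-(u/k))) k, ← Real.rpow_mul (by norm_num)]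
            congr 1
            field_simp
    linarith
  -- assemble
  refine le_trans hstep ?_
  calc (I.card : ℝ≥0∞) * ENNReal.ofReal p ^ k
      ≤ (t.choose k : ℝ≥0∞) * ENNReal.ofReal p ^ k := by
        apply mul_le_mul_left
        exact_mod_cast hIcard
    _ = ENNReal.ofReal ((t.choose k : ℝ) * p ^ k) := by
        rw [ENNReal.ofReal_mul (by positivity), ENNReal.ofReal_natCast,
          ENNReal.ofReal_pow hp0]
    _ ≤ ENNReal.ofReal ((2:ℝ) ^ (-u)) := ENNReal.ofReal_le_ofReal hreal
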